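/- The binormal ROC curve R(p) = Φ(μ + σΦ^{-1}(p)) with μ > 0 is concave on (0,1) if and only if σ = 1. -/

import Mathlib

open Set MeasureTheory

noncomputable def stdNormalPDF (x : ℝ) : ℝ :=
  Real.exp (-x ^ 2 / 2) / Real.sqrt (2 * Real.pi)

noncomputable def stdNormalCDF (x : ℝ) : ℝ :=
  ∫ t in Set.Iic x, stdNormalPDF t

lemma pdf_pos (x : ℝ) : 0 < stdNormalPDF x :=
  div_pos (Real.exp_pos _) (Real.sqrt_pos.2 (by positivity))

lemma pdf_cont : Continuous stdNormalPDF := by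
  unfold stdNormalPDF; fun_prop

lemma pdf_integrable : Integrable stdNormalPDF := by
  have h : Integrable (fun x : ℝ => Real.exp (-(1/2) * x ^ 2)) := integrable_exp_neg_mul_sq (by norm_num)
  have : stdNormalPDF = fun x => Real.exp (-(1/2) * x ^ 2) / Real.sqrt (2 * Real.pi) := by
    funext x; unfold stdNormalPDF; ring_nf
  rw [this]
  exact h.div_const _

lemma pdf_total : ∫ x, stdNormalPDF x = 1 := by
  have h : ∫ x : ℝ, Real.exp (-(1/2) * x ^ 2) = Real.sqrt (Real.pi / (1/2)) :=
    integral_gaussian (1/2)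
  have h2 : stdNormalPDF = fun x => Real.exp (-(1/2) * x ^ 2) / Real.sqrt (2 * Real.pi) := by
    funext x; unfold stdNormalPDF; ring_nf
  rw [h2, integral_div, h]
  rw [div_eq_one_iff_eq (by positivity)]
  congr 1; ring

lemma cdf_hasDeriv (x : ℝ) : HasDerivAt stdNormalCDF (stdNormalPDF x) x := by
  have hfun : ∀ y, stdNormalCDF y = stdNormalCDF 0 + ∫ t in (0:ℝ)..y, stdNormalPDF t := by
    intro y
    rw [← intervalIntegral.integral_Iic_sub_Iic pdf_integrable.integrableOn
      pdf_integrable.integrableOn]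
    unfold stdNormalCDF; ring
  have h : HasDerivAt (fun y => stdNormalCDF 0 + ∫ t in (0:ℝ)..y, stdNormalPDF t)
      (stdNormalPDF x) x := by
    apply HasDerivAt.const_add
    exact intervalIntegral.integral_hasDerivAt_right
      (pdf_integrable.intervalIntegrable)
      pdf_cont.aestronglyMeasurable.stronglyMeasurableAtFilter
      pdf_cont.continuousAt
  exact h.congr_of_eventuallyEq (Filter.Eventually.of_forall hfun)

lemma cdf_strictMono : StrictMono stdNormalCDF := by
  intro a b hab
  have h := intervalIntegral.intervalIntegral_pos_of_pos (f := stdNormalPDF) (a := a) (b := b)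
    pdf_integrable.intervalIntegrable pdf_pos hab
  have := intervalIntegral.integral_Iic_sub_Iic (f := stdNormalPDF) (μ := volume)
    pdf_integrable.integrableOn pdf_integrable.integrableOn (a := a) (b := b)
  unfold stdNormalCDF
  linarith [this]

lemma cdf_mem_Ioo (x : ℝ) : stdNormalCDF x ∈ Set.Ioo (0:ℝ) 1 := by
  constructor
  · have h1 : (0:ℝ) ≤ stdNormalCDF (x - 1) := by
      apply setIntegral_nonneg measurableSet_Iic
      intro t _; exact (pdf_pos t).le
    have := cdf_strictMono (show x - 1 < x by linarith)
    linarith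
  · have h1 : stdNormalCDF (x + 1) ≤ 1 := by
      rw [← pdf_total]
      exact setIntegral_le_integral pdf_integrable
        (Filter.Eventually.of_forall fun t => (pdf_pos t).le)
    have := cdf_strictMono (show x < x + 1 by linarith)
    linarith

/-- the binormal ROC curve `R(p) = Φ(μ + σΦ⁻¹(p))` with `μ > 0`
is concave on (0,1) iff `σ = 1`. -/
theorem binormal_concave_iff (μ σ : ℝ) (hμ : 0 < μ) (hσ : 0 < σ)
    (Φinv : ℝ → ℝ)
    (hinv : ∀ p ∈ Set.Ioo (0:ℝ) 1, stdNormalCDF (Φinv p) = p)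
    (hinv' : ∀ x : ℝ, Φinv (stdNormalCDF x) = x) :
    ConcaveOn ℝ (Set.Ioo (0:ℝ) 1) (fun p => stdNormalCDF (μ + σ * Φinv p)) ↔
      σ = 1 := by
  set R : ℝ → ℝ := fun p => stdNormalCDF (μ + σ * Φinv p) with hR
  set E : ℝ → ℝ := fun x => σ * Real.exp (x ^ 2 / 2 - (μ + σ * x) ^ 2 / 2) with hE
  -- Φinv is strictly monotone on (0,1)
  have hΦinvMono : StrictMonoOn Φinv (Set.Ioo (0:ℝ) 1) := by
    intro p hp q hq hpq
    apply cdf_strictMono.lt_iff_lt.1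
    rw [hinv p hp, hinv q hq]; exact hpq
  -- Φinv is continuous on (0,1)
  have hcont : ∀ p ∈ Set.Ioo (0:ℝ) 1, ContinuousAt Φinv p := by
    intro p hp
    apply hΦinvMono.continuousAt_of_image_mem_nhds (isOpen_Ioo.mem_nhds hp)
    have himg : Φinv '' Set.Ioo (0:ℝ) 1 = Set.univ :=
      Set.eq_univ_of_forall fun y => ⟨stdNormalCDF y, cdf_mem_Ioo y, hinv' y⟩
    rw [himg]; exact Filter.univ_mem
  -- Φinv derivative
  have hΦinvDeriv : ∀ p ∈ Set.Ioo (0:ℝ) 1,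
      HasDerivAt Φinv (stdNormalPDF (Φinv p))⁻¹ p := by
    intro p hp
    refine HasDerivAt.of_local_left_inverse (hcont p hp) (cdf_hasDeriv (Φinv p))
      (ne_of_gt (pdf_pos _)) ?_
    filter_upwards [isOpen_Ioo.mem_nhds hp] with y hy using hinv y hy
  -- R derivative
  have hRderiv : ∀ p ∈ Set.Ioo (0:ℝ) 1, HasDerivAt R (E (Φinv p)) p := by
    intro p hp
    have h1 : HasDerivAt (fun p => μ + σ * Φinv p) (σ * (stdNormalPDF (Φinv p))⁻¹) p :=
      ((hΦinvDeriv p hp).const_mul σ).const_add μ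
    have h2 := (cdf_hasDeriv (μ + σ * Φinv p)).comp p h1
    have h3 : stdNormalPDF (μ + σ * Φinv p) * (σ * (stdNormalPDF (Φinv p))⁻¹)
        = E (Φinv p) := by
      simp only [hE, stdNormalPDF]
      have hs : Real.sqrt (2 * Real.pi) ≠ 0 := by positivity
      have he : Real.exp (-(Φinv p) ^ 2 / 2) ≠ 0 := Real.exp_ne_zero _
      rw [show (Φinv p) ^ 2 / 2 - (μ + σ * Φinv p) ^ 2 / 2
          = (-(μ + σ * Φinv p) ^ 2 / 2) - (-(Φinv p) ^ 2 / 2) by ring, Real.exp_sub]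
      field_simp
    rw [← h3]
    exact h2
  have hDeq : ∀ p ∈ Set.Ioo (0:ℝ) 1, deriv R p = E (Φinv p) :=
    fun p hp => (hRderiv p hp).deriv
  constructor
  · -- concave → σ = 1
    intro hC
    by_contra hσ1
    have ha : (1:ℝ) - σ ^ 2 ≠ 0 := by
      intro h
      apply hσ1
      nlinarith
    set a : ℝ := 1 - σ ^ 2 with haa
    set v : ℝ := μ * σ / a with hv
    have hav : a * v = μ * σ := by rw [hv]; field_simp
    -- pick x1 < x2 with q x1 < q x2 where q x = x²/2 - (μ+σx)²/2
    obtain ⟨x1, x2, h12, hq⟩ : ∃ x1 x2 : ℝ, x1 < x2 ∧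
        x1 ^ 2 / 2 - (μ + σ * x1) ^ 2 / 2 < x2 ^ 2 / 2 - (μ + σ * x2) ^ 2 / 2 := by
      have hav' : (1 - σ ^ 2) * v = μ * σ := by rw [← haa]; exact hav
      rcases lt_or_gt_of_ne ha.symm with hlt | hgt
      · -- 0 < a
        refine ⟨v + 1, v + 2, by linarith, by nlinarith [hav', hlt, haa]⟩
      · -- a < 0
        refine ⟨v - 2, v - 1, by linarith, by nlinarith [hav', hgt, haa]⟩
    set p1 := stdNormalCDF x1 with hp1
    set p2 := stdNormalCDF x2 with hp2
    have hp1m := cdf_mem_Ioo x1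
    have hp2m := cdf_mem_Ioo x2
    have hle : p1 ≤ p2 := (cdf_strictMono h12).le
    have hconv : ConvexOn ℝ (Set.Ioo (0:ℝ) 1) (fun p => -R p) := hC.neg
    have hdiff : ∀ p ∈ Set.Ioo (0:ℝ) 1, DifferentiableAt ℝ (fun p => -R p) p :=
      fun p hp => ((hRderiv p hp).differentiableAt.neg)
    have hmono := hconv.monotoneOn_deriv hdiff hp1m hp2m hle
    rw [deriv.fun_neg, deriv.fun_neg, hDeq p1 hp1m, hDeq p2 hp2m, hinv' x1, hinv' x2] at hmono
    have : E x1 < E x2 := by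
      apply mul_lt_mul_of_pos_left _ hσ
      exact Real.exp_lt_exp.2 hq
    linarith
  · -- σ = 1 → concave
    intro hσ1
    subst hσ1
    apply AntitoneOn.concaveOn_of_deriv (convex_Ioo 0 1)
    · exact fun p hp => (hRderiv p hp).continuousAt.continuousWithinAt
    · rw [interior_Ioo]
      exact fun p hp => (hRderiv p hp).differentiableAt.differentiableWithinAt
    · rw [interior_Ioo]
      intro p hp q hq hpq
      rw [hDeq p hp, hDeq q hq]
      have hxy : Φinv p ≤ Φinv q := hΦinvMono.monotoneOn hp hq hpq
      simp only [hE, one_mul]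
      apply Real.exp_le_exp.2
      nlinarith
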